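/- For every n ≥ 1 and every z in the closed unit disk, the Newton approximants satisfy |F_n(z) - √(1-z)| ≤ (2/√π)·|z|^{2^n}/√(2^n - 1), and the Halley approximants satisfy |G_n(z) - √(1-z)| ≤ (2/√π)·|z|^{3^n}/√(3^n - 1). -/

import Mathlib

noncomputable def Fc (z : ℂ) : ℕ → ℂ
  | 0 => 1
  | n + 1 => (Fc z n + (1 - z) / Fc z n) / 2

noncomputable def Gc (z : ℂ) : ℕ → ℂ
  | 0 => 1
  | n + 1 => Gc z n * ((Gc z n) ^ 2 + 3 * (1 - z)) / (3 * (Gc z n) ^ 2 + 1 - z)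

lemma aux_ne (w : ℂ) (hw : ‖w‖ < 1) :
    1 - w ≠ 0 ∧ 1 + w ≠ 0 ∧ 1 + w + w ^ 2 ≠ 0 := by
  refine ⟨?_, ?_, ?_⟩
  · intro h
    have : w = 1 := by linear_combination -h
    rw [this] at hw; simp at hw
  · intro h
    have : w = -1 := by linear_combination h
    rw [this] at hw; simp at hw
  · intro h
    have h3 : w ^ 3 = 1 := by linear_combination (w - 1) * h
    have h4 : ‖w ^ 3‖ = 1 := by rw [h3]; simp
    rw [norm_pow] at h4
    have := pow_lt_one₀ (norm_nonneg w) hw (by norm_num : 3 ≠ 0)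
    linarith

lemma step_newton (s w : ℂ) (hs : s ≠ 0) (h1 : 1 - w ≠ 0) (h2 : 1 + w ≠ 0) :
    (s * (1 + w) / (1 - w) + s ^ 2 / (s * (1 + w) / (1 - w))) / 2
      = s * (1 + w ^ 2) / (1 - w ^ 2) := by
  have hF : s * (1 + w) ≠ 0 := mul_ne_zero hs h2
  have h12 : (1 : ℂ) - w ^ 2 ≠ 0 := by
    intro h
    have : (1 - w) * (1 + w) = 0 := by linear_combination h
    rcases mul_eq_zero.mp this with h' | h' <;> [exact h1 h'; exact h2 h']
  field_simp
  ring

lemma step_halley (s w : ℂ) (hs : s ≠ 0) (h1 : 1 - w ≠ 0) (h2 : 1 + w ≠ 0)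
    (h3 : 1 + w + w ^ 2 ≠ 0) :
    (s * (1 + w) / (1 - w)) * ((s * (1 + w) / (1 - w)) ^ 2 + 3 * s ^ 2)
      / (3 * (s * (1 + w) / (1 - w)) ^ 2 + s ^ 2)
      = s * (1 + w ^ 3) / (1 - w ^ 3) := by
  have hd : 3 * (s * (1 + w) / (1 - w)) ^ 2 + s ^ 2 ≠ 0 := by
    have he : 3 * (s * (1 + w) / (1 - w)) ^ 2 + s ^ 2
        = 4 * s ^ 2 * (1 + w + w ^ 2) / (1 - w) ^ 2 := by
      field_simp; ring
    rw [he]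
    apply div_ne_zero _ (pow_ne_zero _ h1)
    exact mul_ne_zero (mul_ne_zero (by norm_num) (pow_ne_zero _ hs)) h3
  have h13 : (1 : ℂ) - w ^ 3 ≠ 0 := by
    intro h
    have : (1 - w) * (1 + w + w ^ 2) = 0 := by linear_combination h
    rcases mul_eq_zero.mp this with h' | h' <;> [exact h1 h'; exact h3 h']
  rw [div_eq_div_iff hd h13]
  field_simp
  ring

lemma closedF (z s r : ℂ) (hs : s ≠ 0) (hr : ‖r‖ < 1) (hsz : s ^ 2 = 1 - z)
    (h0 : s * (1 + r) / (1 - r) = 1) :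
    ∀ n, Fc z n = s * (1 + r ^ 2 ^ n) / (1 - r ^ 2 ^ n) := by
  intro n
  induction n with
  | zero => simpa [Fc] using h0.symm
  | succ n ih =>
    have hw : ‖r ^ 2 ^ n‖ < 1 := by
      rw [norm_pow]
      exact pow_lt_one₀ (norm_nonneg r) hr (by positivity)
    obtain ⟨h1, h2, _⟩ := aux_ne _ hw
    have : Fc z (n + 1) = (Fc z n + (1 - z) / Fc z n) / 2 := rfl
    rw [this, ih, ← hsz, step_newton s _ hs h1 h2, ← pow_mul, ← pow_succ]

lemma closedG (z s r : ℂ) (hs : s ≠ 0) (hr : ‖r‖ < 1) (hsz : s ^ 2 = 1 - z)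
    (h0 : s * (1 + r) / (1 - r) = 1) :
    ∀ n, Gc z n = s * (1 + r ^ 3 ^ n) / (1 - r ^ 3 ^ n) := by
  intro n
  induction n with
  | zero => simpa [Gc] using h0.symm
  | succ n ih =>
    have hw : ‖r ^ 3 ^ n‖ < 1 := by
      rw [norm_pow]
      exact pow_lt_one₀ (norm_nonneg r) hr (by positivity)
    obtain ⟨h1, h2, h3⟩ := aux_ne _ hw
    have heq : Gc z (n + 1) = Gc z n * ((Gc z n) ^ 2 + 3 * (1 - z))
        / (3 * (Gc z n) ^ 2 + 1 - z) := rfl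
    have hrw : 3 * (Gc z n) ^ 2 + 1 - z = 3 * (Gc z n) ^ 2 + s ^ 2 := by
      rw [hsz]; ring
    rw [heq, hrw, ih, ← hsz, step_halley s _ hs h1 h2 h3, ← pow_mul, ← pow_succ]

lemma real_est (N : ℕ) (hN : 2 ≤ N) (a b t : ℝ) (ha : 0 < a)
    (hb2 : 1 + Real.sqrt 2 * a ≤ b) (ht : 0 ≤ t) (ht1 : t ≤ 1) :
    2 * a * (t ^ N / b ^ N) / (1 - t ^ N / b ^ N)
      ≤ 2 / Real.sqrt Real.pi * t ^ N / Real.sqrt ((N : ℝ) - 1) := by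
  have hs2 : Real.sqrt 2 * Real.sqrt 2 = 2 := Real.mul_self_sqrt (by norm_num)
  have hsqrt2 : 0 < Real.sqrt 2 := by positivity
  have hb1 : 1 < b := by nlinarith
  have hbpos : 0 < b := by linarith
  have hNpos : (0:ℝ) < N := by
    have : 0 < N := by omega
    exact_mod_cast this
  have htN : t ^ N ≤ 1 := pow_le_one₀ ht ht1
  have hbN : (1 : ℝ) + N * (Real.sqrt 2 * a) ≤ b ^ N := by
    calc (1 : ℝ) + N * (Real.sqrt 2 * a)
        ≤ (1 + Real.sqrt 2 * a) ^ N := one_add_mul_le_pow (by nlinarith) N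
      _ ≤ b ^ N := pow_le_pow_left₀ (by positivity) hb2 N
  have hbNpos : 0 < b ^ N := by positivity
  have h2a : 0 < (N:ℝ) * (Real.sqrt 2 * a) := mul_pos hNpos (by positivity)
  have hkeypos : 0 < b ^ N - t ^ N := by nlinarith
  have e1 : 1 - t ^ N / b ^ N = (b ^ N - t ^ N) / b ^ N := by field_simp
  have e2 : 2 * a * (t ^ N / b ^ N) / (1 - t ^ N / b ^ N)
      = 2 * a * t ^ N / (b ^ N - t ^ N) := by
    rw [e1]
    rw [div_eq_div_iff (by positivity) (by positivity)]
    field_simp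
  have hπ : (0:ℝ) < Real.sqrt Real.pi := Real.sqrt_pos.mpr Real.pi_pos
  have hN1 : (1:ℝ) ≤ (N:ℝ) - 1 := by
    have : (2:ℝ) ≤ N := by exact_mod_cast hN
    linarith
  have hDpos : 0 < Real.sqrt Real.pi * Real.sqrt ((N:ℝ) - 1) :=
    mul_pos hπ (Real.sqrt_pos.mpr (by linarith))
  have hs4 : Real.sqrt Real.pi * Real.sqrt ((N:ℝ) - 1) ≤ Real.sqrt 2 * N := by
    rw [← Real.sqrt_mul Real.pi_pos.le]
    have h1 : Real.pi * ((N:ℝ) - 1) ≤ 2 * (N:ℝ) ^ 2 := by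
      nlinarith [Real.pi_le_four]
    calc Real.sqrt (Real.pi * ((N:ℝ) - 1)) ≤ Real.sqrt (2 * (N:ℝ) ^ 2) :=
          Real.sqrt_le_sqrt h1
      _ = Real.sqrt 2 * N := by
          rw [Real.sqrt_mul (by norm_num), Real.sqrt_sq hNpos.le]
  have hkey : Real.sqrt Real.pi * Real.sqrt ((N:ℝ) - 1) * a ≤ b ^ N - t ^ N := by
    have h5 : Real.sqrt Real.pi * Real.sqrt ((N:ℝ) - 1) * a ≤ Real.sqrt 2 * N * a :=
      mul_le_mul_of_nonneg_right hs4 ha.le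
    have e : Real.sqrt 2 * N * a = N * (Real.sqrt 2 * a) := by ring
    rw [e] at h5
    linarith
  have hrhs : 2 / Real.sqrt Real.pi * t ^ N / Real.sqrt ((N:ℝ) - 1)
      = 2 * t ^ N / (Real.sqrt Real.pi * Real.sqrt ((N:ℝ) - 1)) := by
    rw [div_mul_eq_mul_div, div_div]
  rw [hrhs, e2, div_le_div_iff₀ hkeypos hDpos]
  have htNn : (0:ℝ) ≤ t ^ N := by positivity
  nlinarith [mul_le_mul_of_nonneg_left hkey (by positivity : (0:ℝ) ≤ 2 * t ^ N)]

lemma main_est (z s r : ℂ) (N : ℕ) (hN : 2 ≤ N) (hzn : ‖z‖ ≤ 1)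
    (hs : s ≠ 0) (hb2 : 1 + Real.sqrt 2 * ‖s‖ ≤ ‖1 + s‖ ^ 2)
    (hmul : ‖r‖ * ‖1 + s‖ ^ 2 = ‖z‖) (hr : ‖r‖ < 1) :
    ‖s * (1 + r ^ N) / (1 - r ^ N) - s‖
      ≤ 2 / Real.sqrt Real.pi * ‖z‖ ^ N / Real.sqrt ((N : ℝ) - 1) := by
  have ha : 0 < ‖s‖ := norm_pos_iff.mpr hs
  have hs2 : Real.sqrt 2 * Real.sqrt 2 = 2 := Real.mul_self_sqrt (by norm_num)
  have hsqrt2 : 0 < Real.sqrt 2 := by positivity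
  have hbpos : 0 < ‖1 + s‖ ^ 2 := by nlinarith
  have hwn : ‖r ^ N‖ < 1 := by
    rw [norm_pow]
    exact pow_lt_one₀ (norm_nonneg r) hr (by omega)
  obtain ⟨h1w, _, _⟩ := aux_ne _ hwn
  have hdiff : s * (1 + r ^ N) / (1 - r ^ N) - s = 2 * s * r ^ N / (1 - r ^ N) := by
    field_simp
    ring
  have hlow : 1 - ‖r ^ N‖ ≤ ‖1 - r ^ N‖ := by
    have := norm_sub_norm_le (1 : ℂ) (r ^ N)
    simpa using this
  have hwpos : 0 < 1 - ‖r ^ N‖ := by linarith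
  have hstep1 : ‖s * (1 + r ^ N) / (1 - r ^ N) - s‖
      ≤ 2 * ‖s‖ * ‖r ^ N‖ / (1 - ‖r ^ N‖) := by
    rw [hdiff, norm_div]
    apply div_le_div₀ (by positivity) _ hwpos hlow
    rw [norm_mul, norm_mul]
    simp
  have hrval : ‖r‖ = ‖z‖ / ‖1 + s‖ ^ 2 := by
    rw [eq_div_iff (ne_of_gt hbpos)]
    exact hmul
  have hwval : ‖r ^ N‖ = ‖z‖ ^ N / (‖1 + s‖ ^ 2) ^ N := by
    rw [norm_pow, hrval, div_pow]
  refine le_trans hstep1 ?_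
  rw [hwval]
  exact real_est N hN ‖s‖ (‖1 + s‖ ^ 2) ‖z‖ ha hb2 (norm_nonneg z) hzn

lemma sqS_sq (z : ℂ) : ((1 - z) ^ ((1:ℂ)/2)) ^ 2 = 1 - z := by
  have h := Complex.cpow_nat_inv_pow (1 - z) (n := 2) (by norm_num)
  norm_num at h
  convert h using 3

lemma sqS_re (z : ℂ) (hz : ‖z‖ ≤ 1) :
    ‖(1 - z) ^ ((1:ℂ)/2)‖ ≤ Real.sqrt 2 * ((1 - z) ^ ((1:ℂ)/2)).re := by
  rcases eq_or_ne z 1 with rfl | hz1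
  · simp [Complex.zero_cpow (by norm_num : (1:ℂ)/2 ≠ 0)]
  · have hu : (1 : ℂ) - z ≠ 0 := by
      intro h; apply hz1; linear_combination -h
    have hure : 0 ≤ (1 - z).re := by
      simp only [Complex.sub_re, Complex.one_re]
      have : z.re ≤ 1 := le_trans (Complex.re_le_norm z) hz
      linarith
    have harg : |(1 - z).arg| ≤ Real.pi / 2 :=
      Complex.abs_arg_le_pi_div_two_iff.mpr hure
    rw [Complex.cpow_def_of_ne_zero hu]
    set w := Complex.log (1 - z) * ((1:ℂ)/2) with hw
    rw [Complex.norm_exp, Complex.exp_re]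
    have him : w.im = (1 - z).arg / 2 := by
      simp [hw, Complex.mul_im, Complex.log_im]
      ring
    have hcos : Real.sqrt 2 / 2 ≤ Real.cos w.im := by
      rw [him, ← Real.cos_pi_div_four, ← Real.cos_abs ((1-z).arg / 2)]
      apply Real.cos_le_cos_of_nonneg_of_le_pi (abs_nonneg _)
      · linarith [Real.pi_pos]
      · rw [abs_div]
        simp only [abs_two]
        linarith
    have hexp : (0:ℝ) < Real.exp w.re := Real.exp_pos _
    have h1 := mul_le_mul_of_nonneg_left hcos hexp.le
    nlinarith [Real.sq_sqrt (by norm_num : (0:ℝ) ≤ 2), Real.sqrt_nonneg 2]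

lemma key_facts (z : ℂ) (hz : ‖z‖ ≤ 1) (hz1 : z ≠ 1)
    (hre : ‖(1 - z) ^ ((1:ℂ)/2)‖ ≤ Real.sqrt 2 * ((1 - z) ^ ((1:ℂ)/2)).re) :
    (1 - z) ^ ((1:ℂ)/2) ≠ 0 ∧ 1 + (1 - z) ^ ((1:ℂ)/2) ≠ 0 ∧
    1 + Real.sqrt 2 * ‖(1 - z) ^ ((1:ℂ)/2)‖ ≤ ‖1 + (1 - z) ^ ((1:ℂ)/2)‖ ^ 2 ∧
    ‖(1 - (1 - z) ^ ((1:ℂ)/2)) / (1 + (1 - z) ^ ((1:ℂ)/2))‖ *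
      ‖1 + (1 - z) ^ ((1:ℂ)/2)‖ ^ 2 = ‖z‖ ∧
    ‖(1 - (1 - z) ^ ((1:ℂ)/2)) / (1 + (1 - z) ^ ((1:ℂ)/2))‖ < 1 := by
  set s := (1 - z) ^ ((1:ℂ)/2) with hsdef
  have hu : (1 : ℂ) - z ≠ 0 := fun h => hz1 (by linear_combination -h)
  have hs0 : s ≠ 0 := by
    rw [hsdef]
    simp [Complex.cpow_eq_zero_iff, hu]
  have hsn : 0 < ‖s‖ := norm_pos_iff.mpr hs0
  have hs2 : Real.sqrt 2 * Real.sqrt 2 = 2 := Real.mul_self_sqrt (by norm_num)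
  have hsre : 0 < s.re := by nlinarith [Real.sqrt_nonneg 2]
  have hb : ‖1 + s‖ ^ 2 = 1 + 2 * s.re + ‖s‖ ^ 2 := by
    rw [Complex.sq_norm, Complex.sq_norm]
    simp [Complex.normSq_apply]
    ring
  have hb2 : 1 + Real.sqrt 2 * ‖s‖ ≤ ‖1 + s‖ ^ 2 := by
    rw [hb]
    nlinarith [Real.sqrt_nonneg 2, sq_nonneg ‖s‖]
  have h1s : (1 : ℂ) + s ≠ 0 := by
    intro h
    have h0 : ‖(1:ℂ) + s‖ ^ 2 = 0 := by rw [h]; simp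
    nlinarith [mul_nonneg (Real.sqrt_nonneg 2) hsn.le]
  have hprod : (1 - s) * (1 + s) = z := by
    have h := sqS_sq z
    rw [← hsdef] at h
    linear_combination -h
  have hmul : ‖(1 - s) / (1 + s)‖ * ‖1 + s‖ ^ 2 = ‖z‖ := by
    rw [norm_div, ← hprod, norm_mul]
    have h1 : ‖1 + s‖ ≠ 0 := by
      simpa using norm_ne_zero_iff.mpr h1s
    field_simp
  refine ⟨hs0, h1s, hb2, hmul, ?_⟩
  have hbgt : 1 < ‖1 + s‖ ^ 2 := by nlinarith [Real.sqrt_nonneg 2]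
  nlinarith [norm_nonneg ((1 - s) / (1 + s))]

lemma base_eq (s : ℂ) (hs : s ≠ 0) (h1s : 1 + s ≠ 0) :
    s * (1 + (1 - s) / (1 + s)) / (1 - (1 - s) / (1 + s)) = 1 := by
  have h2 : 1 - (1 - s) / (1 + s) = 2 * s / (1 + s) := by
    field_simp
    ring
  have h3 : 1 + (1 - s) / (1 + s) = 2 / (1 + s) := by
    field_simp
    ring
  rw [h2, h3]
  field_simp

lemma Fc_one : ∀ n, Fc 1 n = (1/2 : ℂ) ^ n := by
  intro n
  induction n with
  | zero => simp [Fc]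
  | succ n ih =>
    have h : Fc 1 (n + 1) = (Fc 1 n + (1 - 1) / Fc 1 n) / 2 := rfl
    rw [h, ih]
    simp
    ring

lemma Gc_one : ∀ n, Gc 1 n = (1/3 : ℂ) ^ n := by
  intro n
  induction n with
  | zero => simp [Gc]
  | succ n ih =>
    have h : Gc 1 (n + 1) = Gc 1 n * ((Gc 1 n) ^ 2 + 3 * (1 - 1))
        / (3 * (Gc 1 n) ^ 2 + 1 - 1) := rfl
    rw [h, ih]
    have hg : ((1:ℂ)/2) ≠ 0 := by norm_num
    have hg3 : ((1/3 : ℂ)) ^ n ≠ 0 := pow_ne_zero _ (by norm_num)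
    field_simp
    ring

lemma num_bound (x : ℝ) (hx : 2 ≤ x) :
    x⁻¹ ≤ 2 / Real.sqrt Real.pi / Real.sqrt (x - 1) := by
  have hπ : (0:ℝ) < Real.sqrt Real.pi := Real.sqrt_pos.mpr Real.pi_pos
  have hx1 : (1:ℝ) ≤ x - 1 := by linarith
  have hD : 0 < Real.sqrt Real.pi * Real.sqrt (x - 1) :=
    mul_pos hπ (Real.sqrt_pos.mpr (by linarith))
  have hs4 : Real.sqrt Real.pi * Real.sqrt (x - 1) ≤ 2 * x := by
    rw [← Real.sqrt_mul Real.pi_pos.le]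
    have h1 : Real.pi * (x - 1) ≤ (2 * x) ^ 2 := by
      nlinarith [Real.pi_le_four]
    calc Real.sqrt (Real.pi * (x - 1)) ≤ Real.sqrt ((2 * x) ^ 2) :=
          Real.sqrt_le_sqrt h1
      _ = 2 * x := Real.sqrt_sq (by linarith)
  rw [div_div, inv_eq_one_div, div_le_div_iff₀ (by linarith) hD]
  linarith

theorem stmt19 (n : ℕ) (hn : 1 ≤ n) (z : ℂ) (hz : ‖z‖ ≤ 1) :
    ‖Fc z n - (1 - z) ^ ((1 : ℂ) / 2)‖ ≤
      2 / Real.sqrt Real.pi * ‖z‖ ^ (2 ^ n) / Real.sqrt (2 ^ n - 1) ∧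
    ‖Gc z n - (1 - z) ^ ((1 : ℂ) / 2)‖ ≤
      2 / Real.sqrt Real.pi * ‖z‖ ^ (3 ^ n) / Real.sqrt (3 ^ n - 1) := by
  rcases eq_or_ne z 1 with rfl | hz1
  · -- special case z = 1
    rw [Fc_one n, Gc_one n]
    have hs : ((1:ℂ) - 1) ^ ((1:ℂ)/2) = 0 := by
      norm_num
    rw [hs]
    have hz1 : ‖(1:ℂ)‖ = 1 := by simp
    rw [hz1]
    simp only [one_pow, sub_zero, norm_pow]
    constructor
    · have h1 : ‖(1/2 : ℂ)‖ = 1/2 := by norm_num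
      rw [h1]
      have h2 : ((1:ℝ)/2) ^ n = ((2:ℝ) ^ n)⁻¹ := by
        rw [one_div, inv_pow]
      rw [h2]
      have hx : (2:ℝ) ≤ 2 ^ n := by
        calc (2:ℝ) = 2 ^ 1 := by norm_num
          _ ≤ 2 ^ n := by
            apply pow_le_pow_right₀ (by norm_num) hn
      calc ((2:ℝ) ^ n)⁻¹ ≤ 2 / Real.sqrt Real.pi / Real.sqrt (2 ^ n - 1) :=
            num_bound _ hx
        _ = 2 / Real.sqrt Real.pi * 1 / Real.sqrt (2 ^ n - 1) := by rw [mul_one]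
    · have h1 : ‖(1/3 : ℂ)‖ = 1/3 := by norm_num
      rw [h1]
      have h2 : ((1:ℝ)/3) ^ n = ((3:ℝ) ^ n)⁻¹ := by
        rw [one_div, inv_pow]
      rw [h2]
      have hx : (2:ℝ) ≤ 3 ^ n := by
        calc (2:ℝ) ≤ 3 ^ 1 := by norm_num
          _ ≤ 3 ^ n := by
            apply pow_le_pow_right₀ (by norm_num) hn
      calc ((3:ℝ) ^ n)⁻¹ ≤ 2 / Real.sqrt Real.pi / Real.sqrt (3 ^ n - 1) :=
            num_bound _ hx
        _ = 2 / Real.sqrt Real.pi * 1 / Real.sqrt (3 ^ n - 1) := by rw [mul_one]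
  · obtain ⟨hs0, h1s, hb2, hmul, hrlt⟩ := key_facts z hz hz1 (sqS_re z hz)
    set s := (1 - z) ^ ((1:ℂ)/2) with hsdef
    set r := (1 - s) / (1 + s) with hrdef
    have hbase : s * (1 + r) / (1 - r) = 1 := base_eq s hs0 h1s
    have hsz : s ^ 2 = 1 - z := sqS_sq z
    constructor
    · rw [closedF z s r hs0 hrlt hsz hbase n]
      have hN : 2 ≤ 2 ^ n := by
        calc 2 = 2 ^ 1 := rfl
          _ ≤ 2 ^ n := Nat.pow_le_pow_right (by norm_num) hn
      have h := main_est z s r (2 ^ n) hN hz hs0 hb2 hmul hrlt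
      have hcast : ((2 ^ n : ℕ) : ℝ) = (2:ℝ) ^ n := by push_cast; ring
      rw [hcast] at h
      exact h
    · rw [closedG z s r hs0 hrlt hsz hbase n]
      have hN : 2 ≤ 3 ^ n := by
        calc 2 ≤ 3 ^ 1 := by norm_num
          _ ≤ 3 ^ n := Nat.pow_le_pow_right (by norm_num) hn
      have h := main_est z s r (3 ^ n) hN hz hs0 hb2 hmul hrlt
      have hcast : ((3 ^ n : ℕ) : ℝ) = (3:ℝ) ^ n := by push_cast; ring
      rw [hcast] at h
      exact h
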